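/- Given finite reduction sequences f, g, h over a well-founded label set with the concatenation property |f·g| = |f| ∪ |g^{(f)}|, the van Oostrom measure satisfies: if (f₁·f₁', g₁·g₁') is a strictly decreasing confluence of a branching with f₁ nonempty, then |(f₁', f₂)| ≺_mul |(g₁, f₁·f₂)| for any continuation f₂ of f₁. -/

import Mathlib

/-- `reduceBy r g f = g^{(f)}`: remove from `g` every letter that is `r`-below
some letter of `f`. -/
noncomputable def reduceBy {W : Type*} (r : W → W → Prop) (g f : List W) : List W :=
  g.filter fun k => @decide (¬ ∃ j ∈ f, r k j) (Classical.propDecidable _)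

/-- Van Oostrom's lexicographic maximum measure on label words:
`|[]| = ∅` and `|i·w| = {i} ∪ |w^{(i)}|`. -/
noncomputable def meas {W : Type*} (r : W → W → Prop) : List W → Multiset W
  | [] => 0
  | i :: w => {i} + meas r (w.filter fun k => @decide (¬ r k i) (Classical.propDecidable _))
termination_by l => l.length
decreasing_by
  simpa using Nat.lt_succ_of_le ((List.length_filter_le _ w.attach).trans_eq (List.length_attach))

theorem meas_nil {W : Type*} (r : W → W → Prop) : meas r [] = 0 := by rw [meas.eq_1]

theorem meas_cons {W : Type*} (r : W → W → Prop) (i : W) (w : List W) :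
    meas r (i :: w) = {i} + meas r (w.filter fun k => @decide (¬ r k i) (Classical.propDecidable _)) := by
  rw [meas.eq_2]

-- every element of meas is a letter of the word
theorem mem_of_mem_meas {W : Type*} (r : W → W → Prop) :
    ∀ n (w : List W), w.length ≤ n → ∀ x ∈ meas r w, x ∈ w := by
  intro n
  induction n with
  | zero =>
    intro w hw x hx
    cases w with
    | nil => simp [meas_nil] at hx
    | cons i t => simp at hw
  | succ n ih =>
    intro w hw x hx
    cases w with
    | nil => simp [meas_nil] at hx
    | cons i t =>
      rw [meas_cons] at hx
      simp only [Multiset.mem_add, Multiset.mem_singleton] at hx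
      rcases hx with rfl | hx
      · exact List.mem_cons_self
      · have hlen : (t.filter fun k => @decide (¬ r k i) (Classical.propDecidable _)).length ≤ n := by
          have := List.length_filter_le (fun k => @decide (¬ r k i) (Classical.propDecidable _)) t
          simp at hw; omega
        exact List.mem_cons_of_mem _ (List.mem_of_mem_filter (ih _ hlen x hx))

-- every letter of the word is, or is below, an element of meas
theorem exists_meas_above {W : Type*} (r : W → W → Prop) :
    ∀ n (w : List W), w.length ≤ n → ∀ j ∈ w, ∃ y ∈ meas r w, y = j ∨ r j y := by
  intro n
  induction n with
  | zero =>
    intro w hw j hj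
    cases w with
    | nil => simp at hj
    | cons i t => simp at hw
  | succ n ih =>
    intro w hw j hj
    cases w with
    | nil => simp at hj
    | cons i t =>
      have hi : i ∈ meas r (i :: t) := by
        rw [meas_cons]; simp
      rcases List.mem_cons.mp hj with rfl | hj
      · exact ⟨j, hi, Or.inl rfl⟩
      · by_cases hji : r j i
        · exact ⟨i, hi, Or.inr hji⟩
        · have hjf : j ∈ t.filter fun k => @decide (¬ r k i) (Classical.propDecidable _) := by
            rw [List.mem_filter]
            exact ⟨hj, by simp [hji]⟩
          have hlen : (t.filter fun k => @decide (¬ r k i) (Classical.propDecidable _)).length ≤ n := by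
            have := List.length_filter_le (fun k => @decide (¬ r k i) (Classical.propDecidable _)) t
            simp at hw; omega
          obtain ⟨y, hy, hyj⟩ := ih _ hlen j hjf
          exact ⟨y, by rw [meas_cons]; exact Multiset.mem_add.mpr (Or.inr hy), hyj⟩

theorem trans_of_hconcat {W : Type*} (r : W → W → Prop)
    (hconcat : ∀ f g : List W, meas r (f ++ g) = meas r f + meas r (reduceBy r g f)) :
    ∀ i j k, r j i → r k j → r k i := by
  intro i j k hji hkj
  by_contra hki
  have h := hconcat [i, j] [k]
  have e1 : meas r ([i, j] ++ [k]) = {i} + ({k} + 0) := by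
    show meas r [i, j, k] = _
    rw [meas_cons]
    have : List.filter (fun k' => @decide (¬ r k' i) (Classical.propDecidable _)) [j, k] = [k] := by
      simp [List.filter_cons, hji, hki]
    rw [this, meas_cons]
    simp [meas_nil]
  have e2 : meas r [i, j] = {i} + 0 := by
    rw [meas_cons]
    have : List.filter (fun k' => @decide (¬ r k' i) (Classical.propDecidable _)) [j] = [] := by
      simp [List.filter_cons, hji]
    rw [this, meas_nil]
  have e3 : reduceBy r [k] [i, j] = [] := by
    unfold reduceBy
    have hex : ∃ j' ∈ [i, j], r k j' := ⟨j, by simp, hkj⟩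
    have hd : ¬ ((fun k' => @decide (¬ ∃ j' ∈ [i, j], r k' j') (Classical.propDecidable _)) k = true) := by
      simp only [decide_eq_true_eq]
      exact not_not_intro hex
    rw [List.filter_cons, if_neg hd, List.filter_nil]
  rw [e1, e2, e3, meas_nil] at h
  have := congrArg Multiset.card h
  simp at this

theorem count_meas_filter_le {W : Type*} (r : W → W → Prop)
    (q : W → Bool) (hq : ∀ k j, r k j → q j = false → q k = false) [DecidableEq W] :
    ∀ n (w : List W), w.length ≤ n → ∀ x, q x = true →
      Multiset.count x (meas r w) ≤ Multiset.count x (meas r (w.filter q)) := by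
  intro n
  induction n with
  | zero =>
    intro w hw x hx
    cases w with
    | nil => simp
    | cons i t => simp at hw
  | succ n ih =>
    intro w hw x hx
    cases w with
    | nil => simp
    | cons i t =>
      have hw' : t.length ≤ n := by simp at hw; omega
      set F : W → Bool := fun k => @decide (¬ r k i) (Classical.propDecidable _) with hF
      have hlenF : (t.filter F).length ≤ n :=
        le_trans (List.length_filter_le _ _) hw'
      by_cases hqi : q i = true
      · have hfil : (i :: t).filter q = i :: t.filter q := by
          rw [List.filter_cons, if_pos hqi]
        rw [hfil, meas_cons, meas_cons]
        have hcomm : (t.filter q).filter F = (t.filter F).filter q := List.filter_comm _ _ _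
        rw [show ((t.filter q).filter fun k => @decide (¬ r k i) (Classical.propDecidable _)) = (t.filter F).filter q from hcomm]
        simp only [Multiset.count_add]
        exact Nat.add_le_add_left (ih _ hlenF x hx) _
      · have hqi' : q i = false := by simpa using hqi
        have hfil : (i :: t).filter q = t.filter q := by
          rw [List.filter_cons, if_neg hqi]
        have hclaim : (t.filter F).filter q = t.filter q := by
          rw [List.filter_comm]
          apply List.filter_eq_self.mpr
          intro a ha
          have hqa : q a = true := (List.mem_filter.mp ha).2
          have hnra : ¬ r a i := fun hra => by
            have h2 := hq a i hra hqi'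
            rw [hqa] at h2; cases h2
          simp [hF, hnra]
        rw [hfil, meas_cons]
        have hxi : x ≠ i := by
          intro h; rw [h, hqi'] at hx; cases hx
        simp only [Multiset.count_add]
        have : Multiset.count x ({i} : Multiset W) = 0 := by
          simp [Multiset.count_singleton, hxi]
        rw [this, Nat.zero_add]
        calc Multiset.count x (meas r (t.filter F))
            ≤ Multiset.count x (meas r ((t.filter F).filter q)) := ih _ hlenF x hx
          _ = Multiset.count x (meas r (t.filter q)) := by rw [hclaim]


/-- The Dershowitz–Manna multiset extension of `r`. -/
def MulOrd {W : Type*} (r : W → W → Prop) (M N : Multiset W) : Prop :=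
  ∃ X Y Z : Multiset W, M = Z + X ∧ N = Z + Y ∧ Y ≠ 0 ∧
    ∀ x ∈ X, ∃ y ∈ Y, r x y

/-- Van Oostrom's measure lemma: if `(f₁·f₁', g₁·g₁')` is a strictly decreasing
confluence of a branching with `f₁` nonempty, then for any continuation `f₂` of
`f₁` we have `|(f₁', f₂)| ≺_mul |(g₁, f₁·f₂)|` (sequences being identified with
their label words, and `|(f,g)| = |f| ∪ |g|`). -/
theorem measure_lemma {W : Type*} (r : W → W → Prop) (hwf : WellFounded r)
    (hconcat : ∀ f g : List W, meas r (f ++ g) = meas r f + meas r (reduceBy r g f))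
    (f₁ f₁' g₁ g₁' f₂ : List W)
    (hne : f₁ ≠ [])
    (hf : ∀ k' ∈ f₁', ∀ k ∈ f₁, r k' k)
    (hg : ∀ l' ∈ g₁', ∀ l ∈ g₁, r l' l) :
    MulOrd r (meas r f₁' + meas r f₂) (meas r g₁ + meas r (f₁ ++ f₂)) := by
  classical
  have htrans : ∀ a b c, r a b → r b c → r a c := by
    intro a b c hab hbc
    exact trans_of_hconcat r hconcat c b a hbc hab
  obtain ⟨h, t, rfl⟩ : ∃ h t, f₁ = h :: t := by
    cases f₁ with
    | nil => exact absurd rfl hne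
    | cons h t => exact ⟨h, t, rfl⟩
  set f₁ := h :: t with hf₁
  set q : W → Bool := fun k => @decide (¬ ∃ j ∈ f₁, r k j) (Classical.propDecidable _) with hqdef
  have hq : ∀ k j, r k j → q j = false → q k = false := by
    intro k j hkj hj
    have hex : ∃ l ∈ f₁, r j l := by
      by_contra hcon'
      simp only [hqdef, decide_eq_false_iff_not, not_not] at hj
      exact hcon' hj
    obtain ⟨l, hl, hjl⟩ := hex
    have : ∃ l' ∈ f₁, r k l' := ⟨l, hl, htrans k j l hkj hjl⟩
    simp only [hqdef, decide_eq_false_iff_not, not_not]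
    exact this
  set A := meas r f₂ with hA
  set B := meas r (reduceBy r f₂ f₁) with hB
  set F := meas r f₁ with hFm
  set G := meas r g₁ with hG
  have hcon : meas r (f₁ ++ f₂) = F + B := hconcat f₁ f₂
  have hred : reduceBy r f₂ f₁ = f₂.filter q := rfl
  have hcount : ∀ x, q x = true → Multiset.count x A ≤ Multiset.count x B := by
    intro x hx
    have := count_meas_filter_le r q hq f₂.length f₂ le_rfl x hx
    rw [hB, hred]
    exact this
  set Z := A ∩ B with hZ
  have hZA : Z ≤ A := Multiset.inter_le_left
  have hZB : Z ≤ B := Multiset.inter_le_right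
  have hhF : h ∈ F := by
    rw [hFm, hf₁, meas_cons]
    exact Multiset.mem_add.mpr (Or.inl (Multiset.mem_singleton_self h))
  refine ⟨meas r f₁' + (A - Z), G + F + (B - Z), Z, ?_, ?_, ?_, ?_⟩
  · ext a
    simp only [Multiset.count_add, Multiset.count_sub, hZ, Multiset.count_inter]
    omega
  · rw [hcon]
    ext a
    simp only [Multiset.count_add, Multiset.count_sub, hZ, Multiset.count_inter]
    omega
  · intro h0
    have : h ∈ G + F + (B - Z) :=
      Multiset.mem_add.mpr (Or.inl (Multiset.mem_add.mpr (Or.inr hhF)))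
    rw [h0] at this
    simp at this
  · intro x hx
    have hYF : ∀ y, y ∈ F → y ∈ G + F + (B - Z) := fun y hy =>
      Multiset.mem_add.mpr (Or.inl (Multiset.mem_add.mpr (Or.inr hy)))
    rcases Multiset.mem_add.mp hx with hx1 | hx2
    · have hxf : x ∈ f₁' := mem_of_mem_meas r f₁'.length f₁' le_rfl x hx1
      exact ⟨h, hYF h hhF, hf x hxf h List.mem_cons_self⟩
    · have hpos : 0 < Multiset.count x (A - Z) := Multiset.count_pos.mpr hx2
      rw [Multiset.count_sub, hZ, Multiset.count_inter] at hpos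
      have hBA : Multiset.count x B < Multiset.count x A := by omega
      have hqx : q x = false := by
        by_contra hq'
        have : q x = true := by simpa using hq'
        exact absurd (hcount x this) (not_le.mpr hBA)
      have hex : ∃ j ∈ f₁, r x j := by
        simpa only [hqdef, decide_eq_false_iff_not, not_not] using hqx
      obtain ⟨j, hj, hxj⟩ := hex
      obtain ⟨y, hyF, hcase⟩ := exists_meas_above r f₁.length f₁ le_rfl j hj
      rcases hcase with rfl | hjy
      · exact ⟨y, hYF y hyF, hxj⟩
      · exact ⟨y, hYF y hyF, htrans x j y hxj hjy⟩
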